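/- For every positive integer n and every subset I of {1,...,n}, the number of permutations π of {1,...,n} with Aexc(π) = I equals the number of permutations π of {1,...,n} with Des(π) = I. -/

import Mathlib

open Finset

/-- The one-line notation value of `π` at position `k ∈ {1,…,n}`:
`oneLine π k = π(k)` with `1`-indexed positions and values. -/
def oneLine {n : ℕ} (π : Equiv.Perm (Fin n)) (k : ℕ) : ℕ :=
  if h : k - 1 < n then ((π ⟨k - 1, h⟩ : Fin n) : ℕ) + 1 else k

/-- `SUC(π) = {i ∈ {1,…,n-1} : π(i+1) = π(i)+1}` (position set). -/
def SUC {n : ℕ} (π : Equiv.Perm (Fin n)) : Finset ℕ :=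
  (Finset.Icc 1 (n - 1)).filter (fun i => oneLine π (i + 1) = oneLine π i + 1)

/-- `FIX(π) = {i ∈ {1,…,n-1} : π(i) = i}` (position set). -/
def FIX {n : ℕ} (π : Equiv.Perm (Fin n)) : Finset ℕ :=
  (Finset.Icc 1 (n - 1)).filter (fun i => oneLine π i = i)

/-- `Asc₂(π) = {π(i+1) : i ∈ {1,…,n-1}, π(i+1) ≥ π(i)+2}` (value set). -/
def Asc2 {n : ℕ} (π : Equiv.Perm (Fin n)) : Finset ℕ :=
  ((Finset.Icc 1 (n - 1)).filter (fun i => oneLine π i + 2 ≤ oneLine π (i + 1))).image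
    (fun i => oneLine π (i + 1))

/-- `Des(π) = {π(i+1) : i ∈ {1,…,n-1}, π(i) > π(i+1)}` (value set). -/
def DesSet {n : ℕ} (π : Equiv.Perm (Fin n)) : Finset ℕ :=
  ((Finset.Icc 1 (n - 1)).filter (fun i => oneLine π (i + 1) < oneLine π i)).image
    (fun i => oneLine π (i + 1))

/-- `Suc(π) = {π(i+1) : i ∈ {1,…,n-1}, π(i+1) = π(i)+1}` (value set). -/
def SucSet {n : ℕ} (π : Equiv.Perm (Fin n)) : Finset ℕ :=
  ((Finset.Icc 1 (n - 1)).filter (fun i => oneLine π (i + 1) = oneLine π i + 1)).image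
    (fun i => oneLine π (i + 1))

/-- `Aexc(π) = {π(i) : i ∈ {2,…,n}, π(i) < i}` (value set). -/
def Aexc {n : ℕ} (π : Equiv.Perm (Fin n)) : Finset ℕ :=
  ((Finset.Icc 2 n).filter (fun i => oneLine π i < i)).image (fun i => oneLine π i)

/-- `Êxc(π) = {π(i) : i ∈ {2,…,n}, π(i) > i}` (value set). -/
def ExcHat {n : ℕ} (π : Equiv.Perm (Fin n)) : Finset ℕ :=
  ((Finset.Icc 2 n).filter (fun i => i < oneLine π i)).image (fun i => oneLine π i)

/-- `F̂ix(π) = {π(i) : i ∈ {2,…,n}, π(i) = i}` (value set). -/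
def FixHat {n : ℕ} (π : Equiv.Perm (Fin n)) : Finset ℕ :=
  ((Finset.Icc 2 n).filter (fun i => oneLine π i = i)).image (fun i => oneLine π i)

/-- `depth(π) = ∑_{i : π(i) > i} (π(i) − i)`. -/
def depthStat {n : ℕ} (π : Equiv.Perm (Fin n)) : ℕ :=
  ∑ i ∈ (Finset.Icc 1 n).filter (fun i => i < oneLine π i), (oneLine π i - i)

/-- `drp(π) = ∑_{i ∈ {1,…,n-1} : π(i) > π(i+1)} (π(i) − π(i+1))`. -/
def drpStat {n : ℕ} (π : Equiv.Perm (Fin n)) : ℕ :=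
  ∑ i ∈ (Finset.Icc 1 (n - 1)).filter (fun i => oneLine π (i + 1) < oneLine π i),
    (oneLine π i - oneLine π (i + 1))

/-- `exc(π) = |{i ∈ {1,…,n} : π(i) > i}|`. -/
def excNum {n : ℕ} (π : Equiv.Perm (Fin n)) : ℕ :=
  ((Finset.Icc 1 n).filter (fun i => i < oneLine π i)).card

/-- `nexc(π) = |{i ∈ {1,…,n} : π(i) < i}|`. -/
def nexcNum {n : ℕ} (π : Equiv.Perm (Fin n)) : ℕ :=
  ((Finset.Icc 1 n).filter (fun i => oneLine π i < i)).card

/-- `des(π) = |{i ∈ {1,…,n-1} : π(i) > π(i+1)}|`. -/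
def desNum {n : ℕ} (π : Equiv.Perm (Fin n)) : ℕ :=
  ((Finset.Icc 1 (n - 1)).filter (fun i => oneLine π (i + 1) < oneLine π i)).card

/-- `asc(π) = |{i ∈ {1,…,n-1} : π(i) < π(i+1)}|`. -/
def ascNum {n : ℕ} (π : Equiv.Perm (Fin n)) : ℕ :=
  ((Finset.Icc 1 (n - 1)).filter (fun i => oneLine π i < oneLine π (i + 1))).card

/-- `inv(π) = |{(i,j) : 1 ≤ i < j ≤ n, π(i) > π(j)}|`. -/
def invNum {n : ℕ} (π : Equiv.Perm (Fin n)) : ℕ :=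
  (((Finset.Icc 1 n) ×ˢ (Finset.Icc 1 n)).filter
    (fun p : ℕ × ℕ => p.1 < p.2 ∧ oneLine π p.2 < oneLine π p.1)).card

section Foata

variable {n : ℕ}

/-- Max of `σ` over positions `≤ i` (0-indexed). -/
def Mx (σ : Equiv.Perm (Fin n)) (i : Fin n) : Fin n :=
  ((Finset.Iic i).image σ).max' ((Finset.nonempty_Iic).image σ)

lemma le_Mx (σ : Equiv.Perm (Fin n)) {i j : Fin n} (h : j ≤ i) : σ j ≤ Mx σ i :=
  Finset.le_max' _ _ (Finset.mem_image_of_mem σ (Finset.mem_Iic.2 h))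

lemma Mx_mem (σ : Equiv.Perm (Fin n)) (i : Fin n) : ∃ j ≤ i, σ j = Mx σ i := by
  have h := Finset.max'_mem ((Finset.Iic i).image σ) ((Finset.nonempty_Iic).image σ)
  rw [Finset.mem_image] at h
  obtain ⟨j, hj, hje⟩ := h
  exact ⟨j, Finset.mem_Iic.1 hj, hje⟩

lemma Mx_mono (σ : Equiv.Perm (Fin n)) {i i' : Fin n} (h : i ≤ i') : Mx σ i ≤ Mx σ i' := by
  obtain ⟨j, hj, hje⟩ := Mx_mem σ i
  rw [← hje]
  exact le_Mx σ (le_trans hj h)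

/-- Successor in the canonical-cycle word (as a function of position). -/
def step (σ : Equiv.Perm (Fin n)) (i : Fin n) : Fin n :=
  if h : (i : ℕ) + 1 < n then
    (if σ ⟨(i : ℕ) + 1, h⟩ < Mx σ i then σ ⟨(i : ℕ) + 1, h⟩ else Mx σ i)
  else Mx σ i

lemma step_inj (σ : Equiv.Perm (Fin n)) : Function.Injective (step σ) := by
  have key : ∀ i i' : Fin n, step σ i = step σ i' → i ≤ i' → i = i' := by
    intro i i' he hle
    by_contra hne
    have hlt : (i : ℕ) < (i' : ℕ) := lt_of_le_of_ne (Fin.le_def.1 hle) (fun h => hne (Fin.ext h))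
    have h1 : (i : ℕ) + 1 < n := by have := i'.isLt; omega
    set j : Fin n := ⟨(i : ℕ) + 1, h1⟩ with hj
    have hji' : j ≤ i' := by rw [Fin.le_def]; simpa [hj] using hlt
    rw [step, dif_pos h1] at he
    by_cases hc : σ j < Mx σ i
    · rw [if_pos hc] at he
      -- he : σ j = step σ i'
      have hMle : Mx σ i ≤ Mx σ i' := Mx_mono σ (le_of_lt (Fin.lt_def.2 hlt))
      have hjlt : σ j < Mx σ i' := lt_of_lt_of_le hc hMle
      rw [step] at he
      split at he
      · next h1' =>
        split at he
        · next =>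
          have := σ.injective he
          rw [Fin.ext_iff] at this
          simp [hj] at this
          omega
        · next => exact absurd he (ne_of_lt hjlt)
      · next => exact absurd he (ne_of_lt hjlt)
    · rw [if_neg hc] at he
      -- he : Mx σ i = step σ i'
      push_neg at hc
      obtain ⟨k, hk, hkeq⟩ := Mx_mem σ i
      have hne2 : σ j ≠ Mx σ i := by
        intro h
        rw [← hkeq] at h
        have := σ.injective h
        rw [Fin.ext_iff] at this
        have hk' := Fin.le_def.1 hk
        simp [hj] at this
        omega
      have hgt : Mx σ i < σ j := lt_of_le_of_ne hc (Ne.symm hne2)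
      have h2 : σ j ≤ Mx σ i' := le_Mx σ hji'
      have hMlt : Mx σ i < Mx σ i' := lt_of_lt_of_le hgt h2
      rw [step] at he
      split at he
      · next h1' =>
        split at he
        · next =>
          -- he : Mx σ i = σ ⟨i'+1, _⟩ ; but Mx σ i = σ k with k ≤ i < i'+1
          rw [← hkeq] at he
          have := σ.injective he
          rw [Fin.ext_iff] at this
          have hk' := Fin.le_def.1 hk
          simp at this
          omega
        · next => exact absurd he (ne_of_lt hMlt)
      · next => exact absurd he (ne_of_lt hMlt)
  intro a b h
  rcases le_total a b with hab | hab
  · exact key a b h hab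
  · exact (key b a h.symm hab).symm

/-- The Foata-type bijection. -/
noncomputable def psi (σ : Equiv.Perm (Fin n)) : Equiv.Perm (Fin n) :=
  Equiv.ofBijective (fun x => step σ (σ.symm x))
    (Finite.injective_iff_bijective.mp
      (fun a b h => σ.symm.injective (step_inj σ h)))

lemma psi_apply (σ : Equiv.Perm (Fin n)) (i : Fin n) : psi σ (σ i) = step σ i := by
  show step σ (σ.symm (σ i)) = step σ i
  rw [Equiv.symm_apply_apply]

/-- Descent-bottom predicate (0-indexed, Fin-valued): `y` is preceded by a larger value. -/
def dbp (σ : Equiv.Perm (Fin n)) (y : Fin n) : Prop :=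
  0 < (σ.symm y : ℕ) ∧ ∀ j : Fin n, (j : ℕ) + 1 = (σ.symm y : ℕ) → y < σ j

instance (σ : Equiv.Perm (Fin n)) : DecidablePred (dbp σ) := fun y => by
  unfold dbp; infer_instance

def desB (σ : Equiv.Perm (Fin n)) : Finset (Fin n) := Finset.univ.filter (dbp σ)

def aexV (π : Equiv.Perm (Fin n)) : Finset (Fin n) :=
  Finset.univ.filter (fun y => (y : ℕ) < (π.symm y : ℕ))

lemma not_dbp_Mx (σ : Equiv.Perm (Fin n)) (i : Fin n) : ¬ dbp σ (Mx σ i) := by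
  obtain ⟨k, hk, hkeq⟩ := Mx_mem σ i
  rw [← hkeq]
  rintro ⟨h0, h2⟩
  simp only [Equiv.symm_apply_apply] at h0 h2
  have hk1 : (k : ℕ) - 1 < n := Nat.lt_of_le_of_lt (Nat.sub_le _ _) k.isLt
  have h3 : σ k < σ ⟨(k : ℕ) - 1, hk1⟩ := h2 ⟨(k : ℕ) - 1, hk1⟩ (by simp; omega)
  have hle : σ ⟨(k : ℕ) - 1, hk1⟩ ≤ Mx σ i := by
    apply le_Mx
    rw [Fin.le_def]
    have := Fin.le_def.1 hk
    simp
    omega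
  rw [hkeq] at h3
  exact absurd (lt_of_le_of_lt hle h3) (lt_irrefl _)

lemma step_lt_iff (σ : Equiv.Perm (Fin n)) (i : Fin n) :
    step σ i < σ i ↔ dbp σ (step σ i) := by
  have hMx : ¬ (Mx σ i < σ i) := not_lt.2 (le_Mx σ le_rfl)
  rw [step]
  split
  · next h1 =>
    split
    · next hc =>
      constructor
      · intro hlt
        refine ⟨?_, ?_⟩
        · rw [Equiv.symm_apply_apply]; simp
        · intro j hj
          rw [Equiv.symm_apply_apply] at hj
          simp only at hj
          have : j = i := Fin.ext (by omega)
          rw [this]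
          exact hlt
      · rintro ⟨h0, h2⟩
        exact h2 i (by rw [Equiv.symm_apply_apply])
    · next hc => simp [hMx, not_dbp_Mx σ i]
  · next h1 => simp [hMx, not_dbp_Mx σ i]

lemma aexV_psi (σ : Equiv.Perm (Fin n)) : aexV (psi σ) = desB σ := by
  ext y
  simp only [aexV, desB, Finset.mem_filter, Finset.mem_univ, true_and]
  set x := (psi σ).symm y with hx
  have hyx : psi σ x = y := (psi σ).apply_symm_apply y
  have hxi : σ (σ.symm x) = x := σ.apply_symm_apply x
  have hstep : step σ (σ.symm x) = y := by
    rw [← psi_apply σ (σ.symm x), hxi, hyx]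
  have h1 : ((y : ℕ) < (x : ℕ)) ↔ step σ (σ.symm x) < σ (σ.symm x) := by
    rw [hstep, hxi, Fin.lt_def]
  rw [h1, step_lt_iff, hstep]

lemma mem_image_perm {y : Fin n} (ρ : Equiv.Perm (Fin n)) (s : Finset (Fin n)) :
    y ∈ s.image ρ ↔ ρ.symm y ∈ s := by
  simp only [Finset.mem_image]
  constructor
  · rintro ⟨a, ha, rfl⟩; rwa [Equiv.symm_apply_apply]
  · intro h; exact ⟨ρ.symm y, h, ρ.apply_symm_apply y⟩

lemma Mx_congr {σ τ : Equiv.Perm (Fin n)} {i : Fin n}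
    (h : ∀ j : Fin n, i < j → σ j = τ j) : Mx σ i = Mx τ i := by
  have himg : (Finset.Iic i).image σ = (Finset.Iic i).image τ := by
    ext y
    rw [mem_image_perm, mem_image_perm, Finset.mem_Iic, Finset.mem_Iic, ← not_lt, ← not_lt]
    constructor
    · intro hs ht
      have : σ (τ.symm y) = y := by rw [h _ ht, Equiv.apply_symm_apply]
      exact hs (by rw [← this, Equiv.symm_apply_apply]; exact ht)
    · intro ht hs
      have : τ (σ.symm y) = y := by rw [← h _ hs, Equiv.apply_symm_apply]
      exact ht (by rw [← this, Equiv.symm_apply_apply]; exact hs)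
  apply le_antisymm
  · apply Finset.max'_le
    intro y hy
    rw [himg] at hy
    exact Finset.le_max' _ _ hy
  · apply Finset.max'_le
    intro y hy
    rw [← himg] at hy
    exact Finset.le_max' _ _ hy

lemma step_congr {σ τ : Equiv.Perm (Fin n)} {i : Fin n}
    (h : ∀ j : Fin n, i < j → σ j = τ j) : step σ i = step τ i := by
  have hM := Mx_congr h
  rw [step, step]
  by_cases h1 : (i : ℕ) + 1 < n
  · rw [dif_pos h1, dif_pos h1]
    have hnext : σ ⟨(i : ℕ) + 1, h1⟩ = τ ⟨(i : ℕ) + 1, h1⟩ :=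
      h _ (by rw [Fin.lt_def]; simp)
    rw [hnext, hM]
  · rw [dif_neg h1, dif_neg h1, hM]

lemma psi_injective :
    Function.Injective (psi : Equiv.Perm (Fin n) → Equiv.Perm (Fin n)) := by
  intro σ τ hpe
  have key : ∀ d : ℕ, ∀ i : Fin n, n ≤ (i : ℕ) + d → σ i = τ i := by
    intro d
    induction d with
    | zero => intro i hi; exact absurd i.isLt (by omega)
    | succ d ih =>
      intro i hi
      have hsuf : ∀ j : Fin n, i < j → σ j = τ j := by
        intro j hj
        exact ih j (by have := Fin.lt_def.1 hj; omega)
      have hstep : step σ i = step τ i := step_congr hsuf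
      have h1 : psi σ (σ i) = psi σ (τ i) := by
        rw [psi_apply, hpe, psi_apply]; exact hstep
      exact (psi σ).injective h1
  exact Equiv.ext fun i => key n i (by omega)

lemma card_desB_eq_card_aexV (J : Finset (Fin n)) :
    (Finset.univ.filter fun σ : Equiv.Perm (Fin n) => desB σ = J).card =
      (Finset.univ.filter fun π : Equiv.Perm (Fin n) => aexV π = J).card := by
  classical
  have hle : ∀ J : Finset (Fin n),
      (Finset.univ.filter fun σ : Equiv.Perm (Fin n) => desB σ = J).card ≤
        (Finset.univ.filter fun π : Equiv.Perm (Fin n) => aexV π = J).card := by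
    intro J
    apply Finset.card_le_card_of_injOn psi
    · intro σ hσ
      simp only [Finset.mem_coe, Finset.mem_filter, Finset.mem_univ, true_and] at hσ ⊢
      rw [aexV_psi]; exact hσ
    · exact fun a _ b _ h => psi_injective h
  have h1 : (Finset.univ : Finset (Equiv.Perm (Fin n))).card =
      ∑ J ∈ (Finset.univ : Finset (Finset (Fin n))),
        (Finset.univ.filter fun σ : Equiv.Perm (Fin n) => desB σ = J).card :=
    Finset.card_eq_sum_card_fiberwise (fun σ _ => Finset.mem_univ (desB σ))
  have h2 : (Finset.univ : Finset (Equiv.Perm (Fin n))).card =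
      ∑ J ∈ (Finset.univ : Finset (Finset (Fin n))),
        (Finset.univ.filter fun π : Equiv.Perm (Fin n) => aexV π = J).card :=
    Finset.card_eq_sum_card_fiberwise (fun π _ => Finset.mem_univ (aexV π))
  have hsum :
      ∑ J ∈ (Finset.univ : Finset (Finset (Fin n))),
        (Finset.univ.filter fun σ : Equiv.Perm (Fin n) => desB σ = J).card =
      ∑ J ∈ (Finset.univ : Finset (Finset (Fin n))),
        (Finset.univ.filter fun π : Equiv.Perm (Fin n) => aexV π = J).card :=
    h1.symm.trans h2
  exact (Finset.sum_eq_sum_iff_of_le (fun J _ => hle J)).1 hsum J (Finset.mem_univ J)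

lemma Aexc_eq (π : Equiv.Perm (Fin n)) :
    Aexc π = (aexV π).image (fun y : Fin n => (y : ℕ) + 1) := by
  ext a
  simp only [Aexc, aexV, Finset.mem_image, Finset.mem_filter, Finset.mem_Icc,
    Finset.mem_univ, true_and]
  constructor
  · rintro ⟨i, ⟨⟨h2, hn'⟩, hlt⟩, rfl⟩
    have hi : i - 1 < n := by omega
    rw [oneLine, dif_pos hi] at hlt ⊢
    refine ⟨π ⟨i - 1, hi⟩, ?_, rfl⟩
    rw [Equiv.symm_apply_apply]
    simp only
    omega
  · rintro ⟨y, hy, rfl⟩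
    have hj : (π.symm y : ℕ) < n := (π.symm y).isLt
    refine ⟨(π.symm y : ℕ) + 1, ⟨⟨by omega, by omega⟩, ?_⟩, ?_⟩
    · rw [oneLine, dif_pos (by omega : (π.symm y : ℕ) + 1 - 1 < n)]
      have : π ⟨(π.symm y : ℕ) + 1 - 1, by omega⟩ = y := by
        have : (⟨(π.symm y : ℕ) + 1 - 1, by omega⟩ : Fin n) = π.symm y :=
          Fin.ext (by simp)
        rw [this, Equiv.apply_symm_apply]
      rw [this]
      omega
    · rw [oneLine, dif_pos (by omega : (π.symm y : ℕ) + 1 - 1 < n)]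
      have : π ⟨(π.symm y : ℕ) + 1 - 1, by omega⟩ = y := by
        have : (⟨(π.symm y : ℕ) + 1 - 1, by omega⟩ : Fin n) = π.symm y :=
          Fin.ext (by simp)
        rw [this, Equiv.apply_symm_apply]
      rw [this]

lemma DesSet_eq (hn : 0 < n) (σ : Equiv.Perm (Fin n)) :
    DesSet σ = (desB σ).image (fun y : Fin n => (y : ℕ) + 1) := by
  ext a
  simp only [DesSet, desB, dbp, Finset.mem_image, Finset.mem_filter, Finset.mem_Icc,
    Finset.mem_univ, true_and]
  constructor
  · rintro ⟨i, ⟨⟨h1, h2⟩, hlt⟩, rfl⟩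
    have hiln : i < n := by omega
    have hi1 : i + 1 - 1 < n := by omega
    have hi0 : i - 1 < n := by omega
    rw [oneLine, oneLine, dif_pos hi1, dif_pos hi0] at hlt
    rw [oneLine, dif_pos hi1]
    refine ⟨σ ⟨i + 1 - 1, hi1⟩, ⟨?_, ?_⟩, rfl⟩
    · rw [Equiv.symm_apply_apply]; simp; omega
    · intro j hj
      rw [Equiv.symm_apply_apply] at hj
      simp only at hj
      have : j = (⟨i - 1, hi0⟩ : Fin n) := Fin.ext (by simp; omega)
      rw [this, Fin.lt_def]
      omega
  · rintro ⟨y, ⟨h0, hlt⟩, rfl⟩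
    set j : ℕ := (σ.symm y : ℕ) with hjdef
    have hjn : j < n := (σ.symm y).isLt
    have he1 : σ ⟨j + 1 - 1, by omega⟩ = y := by
      have : (⟨j + 1 - 1, by omega⟩ : Fin n) = σ.symm y := Fin.ext (by simp [hjdef])
      rw [this, Equiv.apply_symm_apply]
    refine ⟨j, ⟨⟨by omega, by omega⟩, ?_⟩, ?_⟩
    · rw [oneLine, oneLine, dif_pos (by omega : j + 1 - 1 < n),
        dif_pos (by omega : j - 1 < n)]
      have h3 : y < σ ⟨j - 1, by omega⟩ := hlt ⟨j - 1, by omega⟩ (by simp; omega)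
      rw [he1]
      have := Fin.lt_def.1 h3
      omega
    · rw [oneLine, dif_pos (by omega : j + 1 - 1 < n)]
      rw [he1]

end Foata

/-- Aexc and Des are equidistributed as set-valued statistics. -/
theorem stmt16 (n : ℕ) (hn : 0 < n) (I : Finset ℕ) (hI : I ⊆ Finset.Icc 1 n) :
    (Finset.univ.filter (fun π : Equiv.Perm (Fin n) => Aexc π = I)).card =
      (Finset.univ.filter (fun π : Equiv.Perm (Fin n) => DesSet π = I)).card := by
  classical
  set J : Finset (Fin n) := Finset.univ.filter (fun y => (y : ℕ) + 1 ∈ I) with hJ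
  have hIJ : I = J.image (fun y : Fin n => (y : ℕ) + 1) := by
    ext a
    simp only [hJ, Finset.mem_image, Finset.mem_filter, Finset.mem_univ, true_and]
    constructor
    · intro ha
      have hab := Finset.mem_Icc.1 (hI ha)
      refine ⟨⟨a - 1, by omega⟩, ?_, by simp; omega⟩
      simpa using (by simpa [Nat.sub_add_cancel hab.1] using ha : a - 1 + 1 ∈ I)
    · rintro ⟨y, hy, rfl⟩
      exact hy
  have hinj : Function.Injective (fun y : Fin n => (y : ℕ) + 1) := by
    intro a b h
    simp only at h
    exact Fin.ext (by omega)
  have himg : Function.Injective (Finset.image (fun y : Fin n => (y : ℕ) + 1)) :=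
    Finset.image_injective hinj
  have e1 : (Finset.univ.filter (fun π : Equiv.Perm (Fin n) => Aexc π = I)) =
      (Finset.univ.filter (fun π : Equiv.Perm (Fin n) => aexV π = J)) := by
    apply Finset.filter_congr
    intro π _
    rw [Aexc_eq π, hIJ]
    exact ⟨fun h => himg h, fun h => by rw [h]⟩
  have e2 : (Finset.univ.filter (fun π : Equiv.Perm (Fin n) => DesSet π = I)) =
      (Finset.univ.filter (fun π : Equiv.Perm (Fin n) => desB π = J)) := by
    apply Finset.filter_congr
    intro π _
    rw [DesSet_eq hn π, hIJ]
    exact ⟨fun h => himg h, fun h => by rw [h]⟩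
  rw [e1, e2, card_desB_eq_card_aexV]
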